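/- Let σ ⊆ ℝ^d be a salient convex cone that is the set of nonnegative real combinations of finitely many vectors of ℤ^d, and let w ∈ σ ∩ ℤ^d be nonzero. Then for every u ∈ Hom(ℤ^d, ℤ) with u(w) ≥ 0, there exists u' ∈ Hom(ℤ^d, ℤ) with u'(w) ≥ 0 such that (u + u')(x) ≥ 0 for all x ∈ σ. -/

import Mathlib

/-- For a salient cone `σ` generated by finitely many integer vectors
and a nonzero `w ∈ σ ∩ ℤ^d`, every integral linear functional `u` with `u(w) ≥ 0`
admits `u'` with `u'(w) ≥ 0` such that `u + u'` is nonnegative on `σ`. -/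
theorem stmt7 (d r : ℕ) (v : Fin r → Fin d → ℤ)
    (σ : Set (Fin d → ℝ))
    (hσ : σ = {x | ∃ c : Fin r → ℝ, (∀ i, 0 ≤ c i) ∧
      x = ∑ i, c i • (fun j => (v i j : ℝ))})
    (hsalient : ∀ x ∈ σ, -x ∈ σ → x = 0)
    (w : Fin d → ℤ) (hwσ : (fun j => (w j : ℝ)) ∈ σ) (hw : w ≠ 0)
    (u : (Fin d → ℤ) →ₗ[ℤ] ℤ) (hu : 0 ≤ u w) :
    ∃ u' : (Fin d → ℤ) →ₗ[ℤ] ℤ, 0 ≤ u' w ∧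
      ∀ x ∈ σ, 0 ≤ ∑ j, (((u + u') (Pi.single j 1) : ℤ) : ℝ) * x j := by
  classical
  -- Step 1: a real linear functional positive on all nonzero generators
  obtain ⟨x1, hx1⟩ : ∃ x1 : Fin d → ℝ, ∀ i, v i ≠ 0 →
      0 < ∑ j, (v i j : ℝ) * x1 j := by
    set cv : Fin r → (Fin d → ℝ) := fun i j => (v i j : ℝ) with hcvdef
    set T : Set (Fin r → ℝ) :=
      stdSimplex ℝ (Fin r) ∩ {c | ∀ i, v i = 0 → c i = 0} with hTdef
    set φ : (Fin r → ℝ) →ₗ[ℝ] (Fin d → ℝ) :=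
      { toFun := fun c => ∑ i, c i • cv i
        map_add' := fun a b => by
          simp [add_smul, Finset.sum_add_distrib]
        map_smul' := fun m a => by
          simp [smul_smul, Finset.smul_sum] } with hφdef
    have hTclosed2 : IsClosed {c : Fin r → ℝ | ∀ i, v i = 0 → c i = 0} := by
      have h : {c : Fin r → ℝ | ∀ i, v i = 0 → c i = 0} =
          ⋂ i, {c : Fin r → ℝ | v i = 0 → c i = 0} := by
        ext c; simp [Set.mem_iInter]
      rw [h]
      refine isClosed_iInter fun i => ?_
      by_cases hvi : v i = 0
      · simpa [hvi] using isClosed_eq (continuous_apply i) continuous_const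
      · simp [hvi]
    have hTcompact : IsCompact T := (isCompact_stdSimplex _ _).inter_right hTclosed2
    have hTconvex : Convex ℝ T := by
      refine (convex_stdSimplex ℝ _).inter ?_
      intro c hc c' hc' a b _ _ _
      intro i hi
      simp only [Pi.add_apply, Pi.smul_apply, smul_eq_mul]
      rw [hc i hi, hc' i hi]
      ring
    have hHconvex : Convex ℝ (φ '' T) := hTconvex.linear_image φ
    have hHclosed : IsClosed (φ '' T) :=
      (hTcompact.image φ.continuous_of_finiteDimensional).isClosed
    have h0H : (0 : Fin d → ℝ) ∉ φ '' T := by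
      rintro ⟨c, ⟨⟨hc0, hcs⟩, hcz⟩, hc⟩
      have hex : ∃ i0, 0 < c i0 := by
        by_contra h
        push_neg at h
        have : ∑ i, c i ≤ 0 := Finset.sum_nonpos fun i _ => h i
        rw [hcs] at this; linarith
      obtain ⟨i0, hi0⟩ := hex
      have hvi0 : v i0 ≠ 0 := by
        intro h
        have := hcz i0 h
        linarith
      have hcsum : ∑ i, c i • cv i = 0 := hc
      have hxσ : c i0 • cv i0 ∈ σ := by
        rw [hσ]
        refine ⟨Pi.single i0 (c i0), fun i => ?_, ?_⟩
        · rw [Pi.single_apply]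
          split_ifs
          · exact hi0.le
          · exact le_refl 0
        · rw [Finset.sum_eq_single i0 (fun b _ hb => by
            rw [Pi.single_apply]; simp [hb]) (by simp)]
          rw [Pi.single_eq_same]
      have hnxσ : -(c i0 • cv i0) ∈ σ := by
        rw [hσ]
        refine ⟨Function.update c i0 0, fun i => ?_, ?_⟩
        · rw [Function.update_apply]
          split_ifs
          · exact le_refl 0
          · exact hc0 i
        · have e1 : ∑ i, Function.update c i0 0 i • cv i
              = ∑ i ∈ Finset.univ.erase i0, c i • cv i := by
            rw [← Finset.add_sum_erase _ (fun i => Function.update c i0 0 i • cv i)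
              (Finset.mem_univ i0)]
            rw [Function.update_self, zero_smul, zero_add]
            exact Finset.sum_congr rfl fun i hi => by
              rw [Function.update_of_ne (Finset.ne_of_mem_erase hi)]
          have e2 : c i0 • cv i0 + ∑ i ∈ Finset.univ.erase i0, c i • cv i
              = ∑ i, c i • cv i :=
            Finset.add_sum_erase Finset.univ (fun i => c i • cv i) (Finset.mem_univ i0)
          rw [hcsum] at e2
          rw [← e1] at e2
          have := eq_neg_of_add_eq_zero_right e2
          exact this.symm ▸ rfl
      have hzero := hsalient _ hxσ hnxσ
      obtain ⟨j, hj⟩ : ∃ j, v i0 j ≠ 0 := by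
        by_contra h
        push_neg at h
        exact hvi0 (funext h)
      have := congrFun hzero j
      simp only [Pi.smul_apply, smul_eq_mul, Pi.zero_apply] at this
      have hne : c i0 * cv i0 j ≠ 0 := by
        apply mul_ne_zero hi0.ne'
        simp only [hcvdef]
        exact_mod_cast hj
      exact hne this
    obtain ⟨f, s, hfs, hfb⟩ := geometric_hahn_banach_point_closed hHconvex hHclosed h0H
    have hf0 : (0:ℝ) < s := by simpa using hfs
    refine ⟨fun j => f (Pi.single j 1), fun i hvi => ?_⟩
    have hmem : cv i ∈ φ '' T := by
      refine ⟨Pi.single i 1, ⟨⟨fun k => ?_, ?_⟩, fun k hk => ?_⟩, ?_⟩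
      · rw [Pi.single_apply]; split_ifs <;> norm_num
      · simp [Pi.single_apply]
      · have : k ≠ i := fun h => hvi (h ▸ hk)
        rw [Pi.single_apply]; simp [this]
      · have hφs : φ (Pi.single i 1) = ∑ k, (Pi.single i 1 : Fin r → ℝ) k • cv k := rfl
        rw [hφs, Finset.sum_eq_single i (fun b _ hb => by
          rw [Pi.single_apply]; simp [hb]) (by simp)]
        rw [Pi.single_eq_same, one_smul]
    have hfcv : s < f (cv i) := hfb _ hmem
    have key : f (cv i) = ∑ j, (v i j : ℝ) * f (Pi.single j 1) := by
      have hy : cv i = ∑ j, (v i j : ℝ) • (Pi.single j 1 : Fin d → ℝ) := by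
        funext k
        rw [Finset.sum_apply]
        simp [Pi.single_apply, hcvdef]
      rw [hy, map_sum]
      exact Finset.sum_congr rfl fun j _ => by rw [map_smul]; rfl
    rw [← key]
    linarith
  -- decomposition of w
  rw [hσ] at hwσ
  obtain ⟨cW, hcW0, hcWeq⟩ := hwσ
  have hwval : ∀ j, (w j : ℝ) = ∑ i, cW i * (v i j : ℝ) := by
    intro j
    have := congrFun hcWeq j
    rw [Finset.sum_apply] at this
    simpa using this
  -- positivity of x1 on w
  have hSw : 0 < ∑ j, (w j : ℝ) * x1 j := by
    have hex : ∃ i, cW i ≠ 0 ∧ v i ≠ 0 := by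
      by_contra h
      push_neg at h
      apply hw
      funext j
      have := hwval j
      have hz : ∀ i ∈ Finset.univ, cW i * (v i j : ℝ) = 0 := by
        intro i _
        rcases eq_or_ne (cW i) 0 with h0 | h0
        · simp [h0]
        · have := h i h0
          simp [this]
      rw [Finset.sum_eq_zero hz] at this
      exact_mod_cast this
    have hrw : ∑ j, (w j : ℝ) * x1 j = ∑ i, cW i * ∑ j, (v i j : ℝ) * x1 j := by
      simp_rw [hwval, Finset.sum_mul, Finset.mul_sum]
      rw [Finset.sum_comm]
      exact Finset.sum_congr rfl fun i _ => Finset.sum_congr rfl fun j _ => by ring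
    rw [hrw]
    obtain ⟨i0, hc0, hv0⟩ := hex
    refine Finset.sum_pos' (fun i _ => ?_) ⟨i0, Finset.mem_univ i0, ?_⟩
    · rcases eq_or_ne (v i) 0 with h0 | h0
      · simp [h0]
      · exact mul_nonneg (hcW0 i) (hx1 i h0).le
    · exact mul_pos ((hcW0 i0).lt_of_ne (Ne.symm hc0)) (hx1 i0 hv0)
  -- Step 2: rounding to an integer functional
  set G : Finset ℝ := insert (∑ j, (w j : ℝ) * x1 j)
    ((Finset.univ.filter fun i => v i ≠ 0).image
      fun i => ∑ j, (v i j : ℝ) * x1 j) with hGdef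
  have hGne : (∑ j, (w j : ℝ) * x1 j) ∈ G := Finset.mem_insert_self _ _
  set δ : ℝ := G.min' ⟨_, hGne⟩ with hδdef
  have hδpos : 0 < δ := by
    rw [hδdef]; apply (Finset.lt_min'_iff _ _).mpr
    intro y hy
    rw [hGdef, Finset.mem_insert] at hy
    rcases hy with h | h
    · rw [h]; exact hSw
    · simp only [Finset.mem_image, Finset.mem_filter] at h
      obtain ⟨i, ⟨_, hvi⟩, rfl⟩ := h
      exact hx1 i hvi
  set Bset : Finset ℝ := insert (∑ j, |(w j : ℝ)|)
    (Finset.univ.image fun i => ∑ j, |(v i j : ℝ)|) with hBdef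
  set B : ℝ := Bset.max' ⟨_, Finset.mem_insert_self _ _⟩ with hBmax
  have hB0 : 0 ≤ B := by
    refine le_trans (Finset.sum_nonneg fun j _ => abs_nonneg _)
      (Finset.le_max' _ (∑ j, |(w j : ℝ)|) (Finset.mem_insert_self _ _))
  obtain ⟨n, hn⟩ := exists_nat_gt (B / δ)
  have ht : B < (n : ℝ) * δ := by
    rw [div_lt_iff₀ hδpos] at hn
    linarith
  set ℓ : Fin d → ℤ := fun j => round ((n : ℝ) * x1 j) with hℓdef
  have main : ∀ a : Fin d → ℤ, δ ≤ ∑ j, (a j : ℝ) * x1 j →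
      (∑ j, |(a j : ℝ)|) ≤ B → 0 < ∑ j, (a j : ℝ) * (ℓ j : ℝ) := by
    intro a hδa hBa
    have herr : |∑ j, (a j : ℝ) * ((ℓ j : ℝ) - (n : ℝ) * x1 j)| ≤ B / 2 := by
      calc |∑ j, (a j : ℝ) * ((ℓ j : ℝ) - (n : ℝ) * x1 j)|
          ≤ ∑ j, |(a j : ℝ) * ((ℓ j : ℝ) - (n : ℝ) * x1 j)| :=
            Finset.abs_sum_le_sum_abs _ _
        _ ≤ ∑ j, |(a j : ℝ)| * (1 / 2) := by
            refine Finset.sum_le_sum fun j _ => ?_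
            rw [abs_mul]
            refine mul_le_mul_of_nonneg_left ?_ (abs_nonneg _)
            rw [hℓdef]
            rw [abs_sub_comm]
            exact abs_sub_round _
        _ = (∑ j, |(a j : ℝ)|) * (1 / 2) := by rw [Finset.sum_mul]
        _ ≤ B / 2 := by linarith
    have hexp : ∑ j, (a j : ℝ) * (ℓ j : ℝ)
        = (n : ℝ) * (∑ j, (a j : ℝ) * x1 j)
          + ∑ j, (a j : ℝ) * ((ℓ j : ℝ) - (n : ℝ) * x1 j) := by
      rw [Finset.mul_sum, ← Finset.sum_add_distrib]
      exact Finset.sum_congr rfl fun j _ => by ring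
    have hmul : (n : ℝ) * δ ≤ (n : ℝ) * (∑ j, (a j : ℝ) * x1 j) :=
      mul_le_mul_of_nonneg_left hδa (Nat.cast_nonneg n)
    have habs := abs_le.mp herr
    rw [hexp]
    linarith
  have hℓv : ∀ i, 0 ≤ ∑ j, (v i j : ℝ) * (ℓ j : ℝ) := by
    intro i
    rcases eq_or_ne (v i) 0 with h0 | h0
    · simp [h0]
    · refine (main (v i) ?_ ?_).le
      · refine Finset.min'_le _ _ ?_
        rw [hGdef]
        refine Finset.mem_insert_of_mem ?_
        exact Finset.mem_image_of_mem _ (Finset.mem_filter.mpr ⟨Finset.mem_univ i, h0⟩)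
      · rw [hBmax]
        exact Finset.le_max' Bset _ (Finset.mem_insert_of_mem
          (Finset.mem_image_of_mem _ (Finset.mem_univ i)))
  have hℓw : 0 < ∑ j, (w j : ℝ) * (ℓ j : ℝ) := by
    refine main w (Finset.min'_le _ _ hGne) ?_
    rw [hBmax]
    exact Finset.le_max' Bset _ (Finset.mem_insert_self _ _)
  have hLw1 : 1 ≤ ∑ j, w j * ℓ j := by
    have h1 : (0 : ℝ) < ((∑ j, w j * ℓ j : ℤ) : ℝ) := by
      push_cast
      exact hℓw
    have h2 : 0 < ∑ j, w j * ℓ j := by exact_mod_cast h1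
    omega
  -- Step 3: the construction
  set L : (Fin d → ℤ) →ₗ[ℤ] ℤ :=
    { toFun := fun x => ∑ j, x j * ℓ j
      map_add' := fun x y => by
        simp [add_mul, Finset.sum_add_distrib]
      map_smul' := fun m x => by
        simp [Finset.mul_sum, mul_assoc] } with hLdef
  have hLsingle : ∀ j, L (Pi.single j 1) = ℓ j := by
    intro j
    have hLs : L (Pi.single j 1) = ∑ k, (Pi.single j 1 : Fin d → ℤ) k * ℓ k := rfl
    rw [hLs, Finset.sum_eq_single j (fun b _ hb => by
      rw [Pi.single_apply]; simp [hb]) (by simp)]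
    rw [Pi.single_eq_same, one_mul]
  have hLw : L w = ∑ j, w j * ℓ j := rfl
  refine ⟨u w • L - u, ?_, ?_⟩
  · simp only [LinearMap.sub_apply, LinearMap.smul_apply, smul_eq_mul]
    rw [hLw]
    nlinarith [mul_le_mul_of_nonneg_left hLw1 hu]
  · intro x hx
    rw [hσ] at hx
    obtain ⟨c, hc0, rfl⟩ := hx
    have huu : u + (u w • L - u) = u w • L := by abel
    rw [huu]
    have hsingle : ∀ j, ((u w • L) (Pi.single j 1) : ℤ) = u w * ℓ j := by
      intro j
      rw [LinearMap.smul_apply, hLsingle, smul_eq_mul]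
    simp only [hsingle]
    have hxval : ∀ j, (∑ i, c i • (fun j' => (v i j' : ℝ))) j
        = ∑ i, c i * (v i j : ℝ) := by
      intro j
      rw [Finset.sum_apply]
      rfl
    calc (0:ℝ) ≤ (u w : ℝ) * ∑ i, c i * ∑ j, (v i j : ℝ) * (ℓ j : ℝ) := by
          refine mul_nonneg (by exact_mod_cast hu) ?_
          exact Finset.sum_nonneg fun i _ => mul_nonneg (hc0 i) (hℓv i)
      _ = ∑ j, ((u w * ℓ j : ℤ) : ℝ) * (∑ i, c i • (fun j' => (v i j' : ℝ))) j := by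
          simp only [hxval]
          push_cast
          simp_rw [Finset.mul_sum]
          rw [Finset.sum_comm]
          exact Finset.sum_congr rfl fun j _ =>
            Finset.sum_congr rfl fun i _ => by ring
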